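/- Let G be a finite abelian group and H ≤ G. For f ∈ ℓ(G), define P_H f = S*_H S_H f (restriction to H followed by zero-extension). Then under the DFT, for each character ψ of G: F_G(P_H f)(ψ) = (1/[G:H]) ∑_{ψ' ∈ Ĝ, ψ'|_H = ψ|_H} F_G(f)(ψ'). -/

import Mathlib

open scoped Classical in
private lemma sum_char_eq' {A : Type*} [CommGroup A] [Fintype A] [Fintype (A →* ℂˣ)] (a : A) :
    ∑ χ : A →* ℂˣ, ((χ a : ℂˣ) : ℂ) = if a = 1 then (Nat.card A : ℂ) else 0 := by
  have : NeZero (Monoid.exponent A) := ⟨Monoid.exponent_ne_zero_of_finite⟩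
  by_cases ha : a = 1
  · subst ha
    obtain ⟨E⟩ := CommGroup.monoidHom_mulEquiv_of_hasEnoughRootsOfUnity A ℂ
    have hc : Fintype.card (A →* ℂˣ) = Nat.card A := by
      rw [← Nat.card_eq_fintype_card]; exact Nat.card_congr E.toEquiv
    simp [hc]
  · rw [if_neg ha]
    obtain ⟨φ, hφ⟩ := CommGroup.exists_apply_ne_one_of_hasEnoughRootsOfUnity A ℂ ha
    have key : ((φ a : ℂˣ) : ℂ) * ∑ χ : A →* ℂˣ, ((χ a : ℂˣ) : ℂ)
        = ∑ χ : A →* ℂˣ, ((χ a : ℂˣ) : ℂ) := by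
      rw [Finset.mul_sum]
      exact Fintype.sum_bijective (φ * ·) (Group.mulLeft_bijective φ) _ _
        (fun χ => by simp)
    have h1 : ((φ a : ℂˣ) : ℂ) ≠ 1 := fun h => hφ (Units.ext h)
    have h2 := sub_eq_zero.mpr key
    rw [← sub_one_mul] at h2
    exact (mul_eq_zero.mp h2).resolve_left (sub_ne_zero.mpr h1)

/-- Under the DFT, the operator `P_H = S*_H S_H` (restriction to `H` followed by
zero-extension) acts by averaging over characters with the same restriction to `H`:
`F_G(P_H f)(ψ) = (1/[G:H]) ∑_{ψ'|_H = ψ|_H} F_G(f)(ψ')`. -/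
theorem dft_sampling_projection {G : Type*} [CommGroup G] [Fintype G]
    (H : Subgroup G) [DecidablePred (· ∈ H)]
    (f : G → ℂ) (ψ : G →* ℂ) (hψ : ∀ g, ‖ψ g‖ = 1) :
    ∑ g : G, (if g ∈ H then f g else 0) * (starRingEnd ℂ) (ψ g) =
      (1 / (H.index : ℂ)) *
        ∑ᶠ ψ' ∈ {ψ' : G →* ℂ |
            (∀ g, ‖ψ' g‖ = 1) ∧ ∀ h : H, ψ' (h : G) = ψ (h : G)},
          ∑ g : G, f g * (starRingEnd ℂ) (ψ' g) := by
  classical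
  haveI : Fintype (G ⧸ H) := Fintype.ofFinite _
  haveI : Finite ((G ⧸ H) →* ℂˣ) := by
    have : NeZero (Monoid.exponent (G ⧸ H)) := ⟨Monoid.exponent_ne_zero_of_finite⟩
    obtain ⟨E⟩ := CommGroup.monoidHom_mulEquiv_of_hasEnoughRootsOfUnity (G ⧸ H) ℂ
    exact Finite.of_equiv _ E.symm.toEquiv
  haveI : Fintype ((G ⧸ H) →* ℂˣ) := Fintype.ofFinite _
  set e : ((G ⧸ H) →* ℂˣ) → (G →* ℂ) :=
    fun χ => ψ * ((Units.coeHom ℂ).comp (χ.comp (QuotientGroup.mk' H))) with he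
  have heval : ∀ χ g, e χ g = ψ g * ((χ (QuotientGroup.mk g) : ℂˣ) : ℂ) := fun χ g => rfl
  have hne : ∀ g, ψ g ≠ 0 := fun g h => by simpa [h] using hψ g
  have habs : ∀ (χ : (G ⧸ H) →* ℂˣ) (a : G ⧸ H), ‖((χ a : ℂˣ) : ℂ)‖ = 1 := by
    intro χ a
    have h0 : a ^ Fintype.card (G ⧸ H) = 1 := pow_card_eq_one
    have h1 : (((χ a : ℂˣ) : ℂ)) ^ Fintype.card (G ⧸ H) = 1 := by
      rw [← Units.val_pow_eq_pow_val, ← map_pow, h0, map_one, Units.val_one]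
    simpa using
      Complex.norm_eq_one_of_pow_eq_one h1 Fintype.card_ne_zero
  have hinj : Function.Injective e := by
    intro χ₁ χ₂ h
    refine MonoidHom.ext fun a => ?_
    obtain ⟨g, rfl⟩ := QuotientGroup.mk'_surjective H a
    have := congrArg (fun φ : G →* ℂ => φ g) h
    simp only [heval] at this
    exact Units.ext (mul_left_cancel₀ (hne g) this)
  have hrange : {ψ' : G →* ℂ |
      (∀ g, ‖ψ' g‖ = 1) ∧ ∀ h : H, ψ' (h : G) = ψ (h : G)} = Set.range e := by
    ext ψ'
    constructor
    · rintro ⟨h1, h2⟩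
      set φ : G →* ℂ := ψ' * ((starRingEnd ℂ).toMonoidHom.comp ψ) with hφ
      have hφ1 : ∀ h ∈ H, φ.toHomUnits h = 1 := by
        intro h hh
        refine Units.ext ?_
        have : φ h = ψ' h * (starRingEnd ℂ) (ψ h) := rfl
        rw [MonoidHom.coe_toHomUnits, Units.val_one, this, h2 ⟨h, hh⟩,
          Complex.mul_conj, Complex.normSq_eq_norm_sq, hψ h]
        norm_num
      refine ⟨QuotientGroup.lift H φ.toHomUnits (fun h hh => MonoidHom.mem_ker.mpr (hφ1 h hh)), ?_⟩
      ext g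
      rw [heval]
      simp only [QuotientGroup.lift_mk', MonoidHom.coe_toHomUnits]
      have : φ g = ψ' g * (starRingEnd ℂ) (ψ g) := rfl
      have hc : ψ g * (starRingEnd ℂ) (ψ g) = 1 := by
        rw [Complex.mul_conj, Complex.normSq_eq_norm_sq, hψ g]; norm_num
      rw [this, mul_comm (ψ' g), ← mul_assoc, hc, one_mul]
    · rintro ⟨χ, rfl⟩
      refine ⟨fun g => ?_, fun h => ?_⟩
      · rw [heval, norm_mul, hψ g, habs, one_mul]
      · rw [heval]
        have : (QuotientGroup.mk (h : G) : G ⧸ H) = 1 := (QuotientGroup.eq_one_iff _).mpr h.2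
        rw [this, map_one, Units.val_one, mul_one]
  have hindex : (H.index : ℂ) ≠ 0 := by
    exact_mod_cast Nat.cast_ne_zero.mpr (Subgroup.index_ne_zero_of_finite (H := H))
  rw [hrange, finsum_mem_range hinj, finsum_eq_sum_of_fintype]
  have step : ∀ g : G, ∑ χ : (G ⧸ H) →* ℂˣ, f g * (starRingEnd ℂ) (e χ g)
      = f g * (starRingEnd ℂ) (ψ g) * (if g ∈ H then (H.index : ℂ) else 0) := by
    intro g
    have : ∑ χ : (G ⧸ H) →* ℂˣ, f g * (starRingEnd ℂ) (e χ g)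
        = f g * (starRingEnd ℂ) (ψ g) *
          (starRingEnd ℂ) (∑ χ : (G ⧸ H) →* ℂˣ, ((χ (QuotientGroup.mk g) : ℂˣ) : ℂ)) := by
      rw [map_sum, Finset.mul_sum]
      refine Finset.sum_congr rfl fun χ _ => ?_
      rw [heval, map_mul]; ring
    rw [this, sum_char_eq']
    have hq : (QuotientGroup.mk g : G ⧸ H) = 1 ↔ g ∈ H := QuotientGroup.eq_one_iff g
    by_cases hg : g ∈ H
    · rw [if_pos (hq.mpr hg), if_pos hg]
      simp [Subgroup.index]
    · rw [if_neg (fun h => hg (hq.mp h)), if_neg hg, map_zero]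
  rw [Finset.sum_comm, Finset.mul_sum]
  refine Finset.sum_congr rfl fun g _ => ?_
  rw [step g]
  by_cases hg : g ∈ H
  · rw [if_pos hg, if_pos hg]
    field_simp
  · rw [if_neg hg, if_neg hg]
    simp
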